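/- Let n ≥ 2 be an integer such that 2^n − 1 is prime (a Mersenne prime), and let ψ : F_2 → ℂˣ be the nontrivial additive character of F_2 (ψ(0) = 1, ψ(1) = −1). Let χ₁, χ₂ : F_{2^n}ˣ → ℂˣ be nontrivial multiplicative characters such that G(χ₁, ψ) = G(χ₂, ψ). Then there exists an integer j such that χ₁(x) = χ₂(x^(2^j)) for all x ∈ F_{2^n}ˣ. -/

import Mathlib

open scoped Classical

/-- The Gauss sum over `E` of the multiplicative character `χ` with respect to the
additive character `ψ` of the base field `F` (composed with the trace map):
`G(χ, ψ) = ∑_{x ∈ Eˣ} χ(x) ψ(Tr(x))`. -/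
noncomputable def gaussSumE (F : Type) {E : Type} [Field F] [Field E] [Fintype F]
    [Fintype E] [Algebra F E] (χ : Eˣ →* ℂˣ) (ψ : AddChar F ℂ) : ℂ :=
  ∑ x : Eˣ, (χ x : ℂ) * ψ (Algebra.trace F E (x : E))

open Polynomial in
lemma auxA {p : ℕ} [NeZero p] (hp : p.Prime) {ζ : ℂ} (hζ : IsPrimitiveRoot ζ p)
    (q : ZMod p → ℚ)
    (h1 : ∑ m : ZMod p, (q m : ℂ) * ζ ^ (m.val) = 0)
    (h2 : ∑ m : ZMod p, q m = 0) : ∀ m, q m = 0 := by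
  haveI : Fact p.Prime := ⟨hp⟩
  set Q : ℚ[X] := ∑ m : ZMod p, monomial m.val (q m) with hQ
  have hcoeff : ∀ m : ZMod p, Q.coeff m.val = q m := by
    intro m
    rw [hQ, finset_sum_coeff]
    rw [Finset.sum_eq_single m]
    · simp
    · intro b _ hb
      rw [coeff_monomial, if_neg]
      exact fun hc => hb (ZMod.val_injective p hc)
    · simp
  have hdeg : Q.natDegree ≤ p - 1 := by
    apply Polynomial.natDegree_sum_le_of_forall_le
    intro m _
    exact (natDegree_monomial_le _).trans (Nat.le_sub_one_of_lt (ZMod.val_lt m))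
  have haev : Polynomial.aeval ζ Q = 0 := by
    rw [hQ, map_sum]
    simpa [Polynomial.aeval_monomial] using h1
  have hdvd : minpoly ℚ ζ ∣ Q := minpoly.dvd ℚ ζ haev
  rw [← Polynomial.cyclotomic_eq_minpoly_rat hζ hp.pos] at hdvd
  by_cases hQ0 : Q = 0
  · intro m
    rw [← hcoeff m, hQ0, coeff_zero]
  obtain ⟨S, hS⟩ := hdvd
  have hS0 : S ≠ 0 := by rintro rfl; simp at hS; exact hQ0 hS
  have hcyc0 : (cyclotomic p ℚ) ≠ 0 := cyclotomic_ne_zero p ℚ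
  have hdegQ : Q.natDegree = (p - 1) + S.natDegree := by
    rw [hS, natDegree_mul hcyc0 hS0, natDegree_cyclotomic, Nat.totient_prime hp]
  have hSdeg : S.natDegree = 0 := by omega
  obtain ⟨s, rfl⟩ := natDegree_eq_zero.mp hSdeg
  -- all coefficients of Q equal s
  have hconst : ∀ m : ZMod p, q m = s := by
    intro m
    rw [← hcoeff m, hS, mul_comm, coeff_C_mul, cyclotomic_prime ℚ p]
    have : (∑ i ∈ Finset.range p, (X : ℚ[X]) ^ i).coeff m.val = 1 := by
      rw [finset_sum_coeff]
      rw [Finset.sum_eq_single m.val]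
      · simp
      · intro b _ hb; rw [coeff_X_pow, if_neg (fun hc => hb hc.symm)]
      · intro hmem; exact absurd (Finset.mem_range.mpr (ZMod.val_lt m)) hmem
    rw [this, mul_one]
  have : (p : ℚ) * s = 0 := by
    rw [← h2]
    simp [hconst, Finset.card_univ, mul_comm]
  have hs0 : s = 0 := by
    rcases mul_eq_zero.mp this with h | h
    · exact absurd (Nat.cast_eq_zero.mp h) hp.ne_zero
    · exact h
  intro m; rw [hconst m, hs0]


lemma zmod2cases'' : ∀ t : ZMod 2, t = 0 ∨ t = 1 := by decide

lemma traceFormula {n : ℕ} (hn : 1 ≤ n) (E : Type) [Field E] [Fintype E]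
    [Algebra (ZMod 2) E] (hE : Fintype.card E = 2 ^ n) (y : E) :
    algebraMap (ZMod 2) E (Algebra.trace (ZMod 2) E y)
      = ∑ i ∈ Finset.range n, y ^ 2 ^ i := by
  haveI : Fact (Nat.Prime 2) := ⟨Nat.prime_two⟩
  haveI hchar : CharP E 2 := charP_of_injective_algebraMap' (ZMod 2) 2
  have hfinrank : Module.finrank (ZMod 2) E = n := by
    have h := Module.card_eq_pow_finrank (K := ZMod 2) (V := E)
    rw [ZMod.card, hE] at h
    exact (Nat.pow_right_injective le_rfl h).symm
  -- generator of Eˣ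
  obtain ⟨g, hg⟩ := IsCyclic.exists_generator (α := Eˣ)
  have hordg : orderOf g = 2 ^ n - 1 := by
    rw [orderOf_eq_card_of_forall_mem_zpowers hg, Nat.card_eq_fintype_card, Fintype.card_units, hE]
  -- the automorphisms
  let φ : Fin n → (E ≃ₐ[ZMod 2] E) := fun i =>
    AlgEquiv.ofRingEquiv (f := iterateFrobeniusEquiv E 2 i) (by
      intro c
      rcases zmod2cases'' c with h | h <;> simp [h])
  have hφ_apply : ∀ (i : Fin n) (z : E), φ i z = z ^ 2 ^ (i : ℕ) := by
    intro i z
    simp [φ, AlgEquiv.ofRingEquiv, iterateFrobeniusEquiv_apply, iterateFrobenius_def]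
  have hφ_inj : Function.Injective φ := by
    have key : ∀ i j : Fin n, (i : ℕ) < (j : ℕ) → φ i ≠ φ j := by
      intro i j hij heq
      have h1 : ((g : E) ^ 2 ^ (i:ℕ)) = (g : E) ^ 2 ^ (j:ℕ) := by
        rw [← hφ_apply i, ← hφ_apply j, heq]
      have h2 : (g : Eˣ) ^ 2 ^ (i:ℕ) = g ^ 2 ^ (j:ℕ) := by
        apply Units.ext; push_cast; exact h1
      have h3 : (2:ℕ) ^ (i:ℕ) ≡ 2 ^ (j:ℕ) [MOD orderOf g] :=
        pow_eq_pow_iff_modEq.mp h2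
      have hd : orderOf g ∣ 2 ^ (j:ℕ) - 2 ^ (i:ℕ) :=
        (Nat.modEq_iff_dvd' (Nat.pow_le_pow_right (by norm_num) hij.le)).mp h3
      have hlt : 2 ^ (j:ℕ) - 2 ^ (i:ℕ) < 2 ^ n - 1 := by
        have hj : 2 ^ (j:ℕ) < 2 ^ n := Nat.pow_lt_pow_right (by norm_num) j.isLt
        have h1' : 2 ^ (j:ℕ) - 2 ^ (i:ℕ) < 2 ^ (j:ℕ) :=
          Nat.sub_lt (Nat.pow_pos (by norm_num)) (Nat.pow_pos (by norm_num))
        exact lt_of_lt_of_le h1' (Nat.le_sub_one_of_lt hj)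
      have hpos : 0 < 2 ^ (j:ℕ) - 2 ^ (i:ℕ) :=
        Nat.sub_pos_of_lt (Nat.pow_lt_pow_right (by norm_num) hij)
      rw [hordg] at hd
      exact absurd (Nat.le_of_dvd hpos hd) (not_le.mpr hlt)
    intro i j hij
    by_contra hne
    rcases lt_or_gt_of_ne (fun h : (i:ℕ) = (j:ℕ) => hne (Fin.ext h)) with h | h
    · exact key i j h hij
    · exact key j i h hij.symm
  have hbij : Function.Bijective φ := by
    rw [Fintype.bijective_iff_injective_and_card]
    refine ⟨hφ_inj, ?_⟩
    rw [Fintype.card_fin, ← Nat.card_eq_fintype_card, IsGalois.card_aut_eq_finrank, hfinrank]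
  rw [trace_eq_sum_automorphisms]
  rw [← Fintype.sum_bijective φ hbij (fun i => φ i y) (fun σ => σ y) (fun i => rfl)]
  rw [← Fin.sum_univ_eq_sum_range (fun i => y ^ 2 ^ i) n]
  exact Finset.sum_congr rfl (fun i _ => hφ_apply i y)


open Polynomial in
lemma powEqTwoPow {n : ℕ} (hn : 2 ≤ n) (hp : Nat.Prime (2 ^ n - 1))
    (E : Type) [Field E] [Fintype E] [Algebra (ZMod 2) E]
    (hE : Fintype.card E = 2 ^ n) (a : ℕ) (ha0 : 0 < a) (halt : a < 2 ^ n - 1)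
    (htr : ∀ x : E, x ≠ 0 →
      Algebra.trace (ZMod 2) E (x ^ a) = Algebra.trace (ZMod 2) E x) :
    ∃ j : ℕ, a = 2 ^ j := by
  set p := 2 ^ n - 1 with hpdef
  have hp2 : 2 < p := by
    have : 4 ≤ 2 ^ n := by calc (4:ℕ) = 2^2 := rfl
                                _ ≤ 2 ^ n := Nat.pow_le_pow_right (by norm_num) hn
    omega
  have hpow1 : ∀ x : E, x ≠ 0 → x ^ p = 1 := by
    intro x hx
    have := FiniteField.pow_card_sub_one_eq_one x hx
    rwa [hE] at this
  have hmodpow : ∀ (x : E), x ≠ 0 → ∀ k : ℕ, x ^ (k % p) = x ^ k := by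
    intro x hx k
    conv_rhs => rw [← Nat.mod_add_div k p]
    rw [pow_add, pow_mul, hpow1 x hx, one_pow, mul_one]
  have he_ne : ∀ i : ℕ, (a * 2 ^ i) % p ≠ 0 := by
    intro i h
    have hdvd : p ∣ a * 2 ^ i := Nat.dvd_of_mod_eq_zero h
    rcases (Nat.Prime.dvd_mul hp).mp hdvd with h' | h'
    · exact absurd (Nat.le_of_dvd ha0 h') (by omega)
    · have := Nat.Prime.dvd_of_dvd_pow hp h'
      have := Nat.le_of_dvd (by norm_num) this
      omega
  set P : E[X] := ∑ i ∈ Finset.range n, ((X : E[X]) ^ ((a * 2 ^ i) % p) + X ^ 2 ^ i)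
    with hPdef
  have heval : ∀ x : E, P.eval x = 0 := by
    intro x
    rw [hPdef]
    simp only [eval_finset_sum, eval_add, eval_pow, eval_X]
    by_cases hx : x = 0
    · subst hx
      rw [Finset.sum_eq_zero]
      intro i _
      rw [zero_pow (he_ne i), zero_pow (by positivity), add_zero]
    · have : ∀ i ∈ Finset.range n, x ^ ((a * 2 ^ i) % p) + x ^ 2 ^ i
          = (x ^ a) ^ 2 ^ i + x ^ 2 ^ i := by
        intro i _
        rw [hmodpow x hx, pow_mul]
      rw [Finset.sum_congr rfl this, Finset.sum_add_distrib,
        ← traceFormula (by omega) E hE, ← traceFormula (by omega) E hE,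
        ← map_add, htr x hx, ← two_smul (ZMod 2) (Algebra.trace (ZMod 2) E x)]
      have h2 : (2 : ZMod 2) = 0 := by decide
      rw [h2, zero_smul, map_zero]
  have hP0 : P = 0 := by
    apply Polynomial.eq_zero_of_natDegree_lt_card_of_eval_eq_zero P
      (f := (id : E → E)) Function.injective_id heval
    have hdeg : P.natDegree ≤ p := by
      apply Polynomial.natDegree_sum_le_of_forall_le
      intro i hi
      apply (Polynomial.natDegree_add_le _ _).trans
      apply max_le
      · rw [natDegree_X_pow]
        exact le_of_lt (Nat.mod_lt _ (by omega))
      · rw [natDegree_X_pow]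
        have : 2 ^ i ≤ 2 ^ (n-1) :=
          Nat.pow_le_pow_right (by norm_num) (by have := Finset.mem_range.mp hi; omega)
        have h2 : 2 ^ (n-1) < 2 ^ n := Nat.pow_lt_pow_right (by norm_num) (by omega)
        omega
    have : p < Fintype.card E := by rw [hE]; omega
    omega
  by_contra hnot
  push_neg at hnot
  have hcoeff : P.coeff a = 1 := by
    rw [hPdef, finset_sum_coeff]
    have : ∀ i ∈ Finset.range n,
        ((X : E[X]) ^ ((a * 2 ^ i) % p) + X ^ 2 ^ i).coeff a
          = if i = 0 then 1 else 0 := by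
      intro i hi
      rw [coeff_add, coeff_X_pow, coeff_X_pow]
      rcases eq_or_ne i 0 with rfl | hi0
      · rw [if_pos (by simp [Nat.mod_eq_of_lt (by omega : a < p)]), if_neg (by simpa using hnot 0), if_pos rfl, add_zero]
      · rw [if_neg (hnot i), if_neg, add_zero, if_neg hi0]
        · -- a ≠ (a * 2 ^ i) % p
          intro hcontra
          have hcast : ((a : ZMod p)) * (2 : ZMod p) ^ i = (a : ZMod p) := by
            have : (((a * 2 ^ i) % p : ℕ) : ZMod p) = ((a * 2 ^ i : ℕ) : ZMod p) :=
              ZMod.natCast_mod _ p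
            rw [← hcontra] at this
            push_cast at this
            exact this.symm
          haveI : Fact p.Prime := ⟨hp⟩
          have hane : (a : ZMod p) ≠ 0 := by
            rw [Ne, ZMod.natCast_eq_zero_iff]
            intro hdvd
            exact absurd (Nat.le_of_dvd ha0 hdvd) (by omega)
          have h2i : (2 : ZMod p) ^ i = 1 := by
            have := mul_left_cancel₀ hane (by rw [hcast, mul_one] : (a : ZMod p) * (2 ^ i) = (a:ZMod p) * 1)
            exact this
          have hdvd : p ∣ 2 ^ i - 1 := by
            rw [← ZMod.natCast_eq_zero_iff]
            push_cast [Nat.cast_sub (Nat.one_le_two_pow : (1:ℕ) ≤ 2 ^ i)]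
            rw [h2i]; ring
          have hipos : 0 < i := Nat.pos_of_ne_zero hi0
          have hilt : i < n := Finset.mem_range.mp hi
          have hlt : 2 ^ i - 1 < p := by
            have : 2 ^ i < 2 ^ n := Nat.pow_lt_pow_right (by norm_num) hilt
            omega
          have hpos : 0 < 2 ^ i - 1 := by
            have : 2 ^ 1 ≤ 2 ^ i := Nat.pow_le_pow_right (by norm_num) hipos
            omega
          exact absurd (Nat.le_of_dvd hpos hdvd) (not_le.mpr hlt)
    rw [Finset.sum_congr rfl this, Finset.sum_ite_eq' (Finset.range n) 0 (fun _ => (1:E))]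
    rw [if_pos (Finset.mem_range.mpr (by omega))]
  rw [hP0, coeff_zero] at hcoeff
  exact one_ne_zero hcoeff.symm


lemma zmod2cases' : ∀ t : ZMod 2, t = 0 ∨ t = 1 := by decide

theorem gauss_sum_converse_mersenne
    (n : ℕ) (hn : 2 ≤ n) (hmersenne : Nat.Prime (2 ^ n - 1))
    (E : Type) [Field E] [Fintype E] [Algebra (ZMod 2) E]
    (hE : Fintype.card E = 2 ^ n)
    (ψ : AddChar (ZMod 2) ℂ) (hψ : ψ 1 = -1)
    (χ₁ χ₂ : Eˣ →* ℂˣ) (hχ₁ : χ₁ ≠ 1) (hχ₂ : χ₂ ≠ 1)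
    (h : gaussSumE (ZMod 2) χ₁ ψ = gaussSumE (ZMod 2) χ₂ ψ) :
    ∃ j : ℕ, ∀ x : Eˣ, χ₁ x = χ₂ (x ^ 2 ^ j) := by
  set p := 2 ^ n - 1 with hpdef
  haveI : Fact p.Prime := ⟨hmersenne⟩
  haveI : NeZero p := ⟨hmersenne.ne_zero⟩
  have hp2 : 2 < p := by
    have : (4:ℕ) ≤ 2 ^ n := by
      calc (4:ℕ) = 2 ^ 2 := rfl
        _ ≤ 2 ^ n := Nat.pow_le_pow_right (by norm_num) hn
    omega
  obtain ⟨g, hg⟩ := IsCyclic.exists_generator (α := Eˣ)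
  have hord : orderOf g = p := by
    rw [orderOf_eq_card_of_forall_mem_zpowers hg, Nat.card_eq_fintype_card,
      Fintype.card_units, hE]
  -- nontrivial characters are nontrivial at g
  have hnt : ∀ χ : Eˣ →* ℂˣ, χ ≠ 1 → χ g ≠ 1 := by
    intro χ hχ hgeq
    apply hχ
    ext x
    obtain ⟨k, rfl⟩ := Subgroup.mem_zpowers_iff.mp (hg x)
    rw [map_zpow, hgeq, one_zpow, MonoidHom.one_apply]
  -- the bijection ZMod p ≃ Eˣ
  have hebij : Function.Bijective (fun m : ZMod p => g ^ m.val) := by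
    rw [Fintype.bijective_iff_injective_and_card]
    constructor
    · intro m₁ m₂ hm
      have := pow_eq_pow_iff_modEq.mp hm
      rw [hord] at this
      have h1 := Nat.mod_eq_of_lt (ZMod.val_lt m₁)
      have h2 := Nat.mod_eq_of_lt (ZMod.val_lt m₂)
      have : m₁.val = m₂.val := by
        unfold Nat.ModEq at this; omega
      exact ZMod.val_injective p this
    · rw [ZMod.card, Fintype.card_units, hE]
  -- primitive root
  set ζ : ℂ := ((χ₂ g : ℂˣ) : ℂ) with hζdef
  have hζp : ζ ^ p = 1 := by
    rw [hζdef, ← Units.val_pow_eq_pow_val, ← map_pow, ← hord, pow_orderOf_eq_one,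
      map_one, Units.val_one]
  have hζne : ζ ≠ 1 := by
    intro hc
    exact hnt χ₂ hχ₂ (Units.ext hc)
  have hζ : IsPrimitiveRoot ζ p := by
    have hdvd : orderOf ζ ∣ p := orderOf_dvd_of_pow_eq_one hζp
    rcases (Nat.Prime.eq_one_or_self_of_dvd hmersenne _ hdvd) with h1 | h1
    · exact absurd (orderOf_eq_one_iff.mp h1) hζne
    · exact h1 ▸ IsPrimitiveRoot.orderOf ζ
  -- exponent a
  have hξp : ((χ₁ g : ℂˣ) : ℂ) ^ p = 1 := by
    rw [← Units.val_pow_eq_pow_val, ← map_pow, ← hord, pow_orderOf_eq_one,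
      map_one, Units.val_one]
  obtain ⟨a, halt, ha⟩ := hζ.eq_pow_of_pow_eq_one hξp
  have ha0 : 0 < a := by
    rcases Nat.eq_zero_or_pos a with rfl | h'
    · rw [pow_zero] at ha
      exact absurd (Units.ext ha.symm) (hnt χ₁ hχ₁)
    · exact h'
  have hu1 : χ₁ g = χ₂ g ^ a := by
    apply Units.ext
    rw [Units.val_pow_eq_pow_val, ← hζdef, ha]
  set u : ZMod p := (a : ZMod p) with hudef
  have hu0 : u ≠ 0 := by
    rw [hudef, Ne, ZMod.natCast_eq_zero_iff]
    intro hdvd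
    exact absurd (Nat.le_of_dvd ha0 hdvd) (by omega)
  have hval : ∀ m : ZMod p, (u * m).val = (a * m.val) % p := by
    intro m
    rw [hudef, ZMod.val_mul, ZMod.val_natCast_of_lt halt]
  have hζmod : ∀ k : ℕ, ζ ^ (k % p) = ζ ^ k := by
    intro k
    conv_rhs => rw [← Nat.mod_add_div k p]
    rw [pow_add, pow_mul, hζp, one_pow, mul_one]
  set c : ZMod p → ℚ := fun m =>
    if Algebra.trace (ZMod 2) E ((g ^ m.val : Eˣ) : E) = 0 then 1 else -1 with hcdef
  have hψc : ∀ m : ZMod p,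
      ψ (Algebra.trace (ZMod 2) E ((g ^ m.val : Eˣ) : E)) = ((c m : ℚ) : ℂ) := by
    intro m
    rcases zmod2cases' (Algebra.trace (ZMod 2) E ((g ^ m.val : Eˣ) : E)) with ht | ht
    · rw [hcdef]
      simp only [ht, if_pos rfl, AddChar.map_zero_eq_one]
      norm_num
    · rw [hcdef]
      simp only [ht, hψ]
      rw [if_neg (by decide : ¬((1 : ZMod 2) = 0))]
      norm_num
  have hGgen : ∀ χ : Eˣ →* ℂˣ, gaussSumE (ZMod 2) χ ψ
      = ∑ m : ZMod p, (χ (g ^ m.val) : ℂ)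
          * ψ (Algebra.trace (ZMod 2) E ((g ^ m.val : Eˣ) : E)) := by
    intro χ
    simp only [gaussSumE]
    exact (Fintype.sum_bijective _ hebij _ _ (fun m => rfl)).symm
  have hG2 : gaussSumE (ZMod 2) χ₂ ψ = ∑ m : ZMod p, (c m : ℂ) * ζ ^ m.val := by
    rw [hGgen χ₂]
    refine Finset.sum_congr rfl fun m _ => ?_
    rw [hψc m, map_pow, Units.val_pow_eq_pow_val, ← hζdef, mul_comm]
  have hG1 : gaussSumE (ZMod 2) χ₁ ψ = ∑ m : ZMod p, (c m : ℂ) * ζ ^ (u * m).val := by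
    rw [hGgen χ₁]
    refine Finset.sum_congr rfl fun m _ => ?_
    rw [hψc m, map_pow, hu1, Units.val_pow_eq_pow_val, Units.val_pow_eq_pow_val, ← hζdef,
      ← pow_mul, hval m, hζmod, mul_comm]
  have hre : ∀ F : ZMod p → ℂ, ∑ m : ZMod p, F (u * m) = ∑ m : ZMod p, F m := by
    intro F
    exact Fintype.sum_bijective (fun m : ZMod p => u * m)
      (Finite.injective_iff_bijective.mp (mul_right_injective₀ hu0)) _ _ (fun m => rfl)
  have hreQ : ∀ F : ZMod p → ℚ, ∑ m : ZMod p, F (u * m) = ∑ m : ZMod p, F m := by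
    intro F
    exact Fintype.sum_bijective (fun m : ZMod p => u * m)
      (Finite.injective_iff_bijective.mp (mul_right_injective₀ hu0)) _ _ (fun m => rfl)
  have hstep : ∑ m : ZMod p, (c (u⁻¹ * m) : ℂ) * ζ ^ m.val
      = ∑ m : ZMod p, (c m : ℂ) * ζ ^ m.val := by
    rw [← hre (fun m => (c (u⁻¹ * m) : ℂ) * ζ ^ m.val)]
    have heq : ∀ m : ZMod p, (c (u⁻¹ * (u * m)) : ℂ) * ζ ^ (u * m).val
        = (c m : ℂ) * ζ ^ (u * m).val := by
      intro m; rw [inv_mul_cancel_left₀ hu0]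
    rw [Finset.sum_congr rfl (fun m _ => heq m), ← hG1, ← hG2]
    exact h
  have h1 : ∑ m : ZMod p, ((c (u⁻¹ * m) - c m : ℚ) : ℂ) * ζ ^ m.val = 0 := by
    push_cast
    simp only [sub_mul]
    rw [Finset.sum_sub_distrib]
    rw [show ∑ m : ZMod p, ((c (u⁻¹ * m) : ℚ) : ℂ) * ζ ^ m.val
        = ∑ m : ZMod p, ((c m : ℚ) : ℂ) * ζ ^ m.val from hstep, sub_self]
  have h2 : ∑ m : ZMod p, (c (u⁻¹ * m) - c m) = 0 := by
    rw [Finset.sum_sub_distrib]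
    rw [← hreQ (fun m => c (u⁻¹ * m))]
    rw [Finset.sum_congr rfl (fun m _ => by rw [inv_mul_cancel_left₀ hu0]), sub_self]
  have hq0 := auxA hmersenne hζ (fun m => c (u⁻¹ * m) - c m) h1 h2
  have hc : ∀ m : ZMod p, c (u * m) = c m := by
    intro m
    have hq := hq0 (u * m)
    simp only [inv_mul_cancel_left₀ hu0] at hq
    exact (sub_eq_zero.mp hq).symm
  have htrE : ∀ x : E, x ≠ 0 →
      Algebra.trace (ZMod 2) E (x ^ a) = Algebra.trace (ZMod 2) E x := by
    intro x hx
    obtain ⟨m, hm⟩ := hebij.2 (Units.mk0 x hx)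
    have hxm : ((g ^ m.val : Eˣ) : E) = x := by
      rw [show (g ^ m.val : Eˣ) = Units.mk0 x hx from hm]; rfl
    have hcm := hc m
    rw [hcdef] at hcm
    simp only at hcm
    have htr2 : Algebra.trace (ZMod 2) E ((g ^ (u * m).val : Eˣ) : E)
        = Algebra.trace (ZMod 2) E ((g ^ m.val : Eˣ) : E) := by
      by_cases hA : Algebra.trace (ZMod 2) E ((g ^ (u * m).val : Eˣ) : E) = 0 <;>
        by_cases hB : Algebra.trace (ZMod 2) E ((g ^ m.val : Eˣ) : E) = 0
      · rw [hA, hB]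
      · rw [if_pos hA, if_neg hB] at hcm; norm_num at hcm
      · rw [if_neg hA, if_pos hB] at hcm; norm_num at hcm
      · rcases zmod2cases' (Algebra.trace (ZMod 2) E ((g ^ (u * m).val : Eˣ) : E)) with h'|h'
        · exact absurd h' hA
        · rcases zmod2cases' (Algebra.trace (ZMod 2) E ((g ^ m.val : Eˣ) : E)) with h''|h''
          · exact absurd h'' hB
          · rw [h', h'']
    have hpow : (g ^ (u * m).val : Eˣ) = (g ^ m.val) ^ a := by
      rw [hval m, ← pow_mul]
      conv_rhs => rw [← pow_mod_orderOf]
      rw [hord, mul_comm]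
    rw [hpow] at htr2
    rw [Units.val_pow_eq_pow_val, hxm] at htr2
    exact htr2
  obtain ⟨j, hj⟩ := powEqTwoPow hn hmersenne E hE a ha0 halt htrE
  refine ⟨j, fun x => ?_⟩
  obtain ⟨m, hm⟩ := hebij.2 x
  rw [← hj, ← hm]
  simp only [map_pow, hu1, ← pow_mul]
  rw [mul_comm]
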